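/- Under the setting of the line-search least-squares method, with s = y + τw and ‖y‖ = 1, the identity (τ - 1)(‖(A - θI)Vy‖² - ‖(A - θI)Vs‖²/‖s‖²) = ‖(A - θI)Vs‖²(1 - 1/‖s‖²) holds. -/
import Mathlib


open Matrix
open scoped ComplexConjugate

/-- Squared Euclidean norm of a complex vector. -/
noncomputable def nsq {k : ℕ} (x : Fin k → ℂ) : ℝ := ∑ i, ‖x i‖ ^ 2

/-- Standard Hermitian inner product (conjugate-linear in the first argument). -/
noncomputable def cip {k : ℕ} (x y : Fin k → ℂ) : ℂ := ∑ i, conj (x i) * y i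

/-- Orthogonal projection `(I - yy*) v`. -/
noncomputable def proj {k : ℕ} (y v : Fin k → ℂ) : Fin k → ℂ := v - cip y v • y

lemma cip_self {k : ℕ} (x : Fin k → ℂ) : cip x x = (nsq x : ℂ) := by
  simp only [cip, nsq, Complex.ofReal_sum]
  refine Finset.sum_congr rfl fun i _ => ?_
  rw [Complex.conj_mul']
  norm_cast

lemma nsq_nonneg {k : ℕ} (x : Fin k → ℂ) : 0 ≤ nsq x :=
  Finset.sum_nonneg fun i _ => by positivity

lemma cip_dot {k : ℕ} (a b : Fin k → ℂ) : cip a b = star a ⬝ᵥ b := by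
  simp [cip, dotProduct]

lemma cip_mulVec {n k : ℕ} (C : Matrix (Fin n) (Fin k) ℂ) (u v : Fin k → ℂ) :
    cip (C.mulVec u) (C.mulVec v) = cip u ((Cᴴ * C).mulVec v) := by
  rw [cip_dot, cip_dot, Matrix.star_mulVec, Matrix.dotProduct_mulVec,
    Matrix.dotProduct_mulVec, Matrix.vecMul_vecMul]

lemma cip_add_right {k : ℕ} (x u v : Fin k → ℂ) : cip x (u + v) = cip x u + cip x v := by
  simp [cip, mul_add, Finset.sum_add_distrib]

lemma cip_smul_right {k : ℕ} (x v : Fin k → ℂ) (c : ℂ) : cip x (c • v) = c * cip x v := by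
  simp only [cip, Pi.smul_apply, smul_eq_mul, Finset.mul_sum]
  exact Finset.sum_congr rfl fun i _ => by ring

lemma cip_sub_right {k : ℕ} (x u v : Fin k → ℂ) : cip x (u - v) = cip x u - cip x v := by
  simp [cip, mul_sub, Finset.sum_sub_distrib]

lemma cip_neg_right {k : ℕ} (x v : Fin k → ℂ) : cip x (-v) = -cip x v := by
  simp [cip]

lemma cip_conj {k : ℕ} (x v : Fin k → ℂ) : conj (cip x v) = cip v x := by
  simp [cip, map_sum, mul_comm]

lemma cip_add_left {k : ℕ} (x u v : Fin k → ℂ) : cip (u + v) x = cip u x + cip v x := by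
  simp [cip, add_mul, Finset.sum_add_distrib]

lemma cip_smul_left {k : ℕ} (x v : Fin k → ℂ) (c : ℂ) : cip (c • v) x = conj c * cip v x := by
  simp only [cip, Pi.smul_apply, smul_eq_mul, Finset.mul_sum]
  exact Finset.sum_congr rfl fun i _ => by rw [_root_.map_mul]; ring

lemma nsq_add_smul {k : ℕ} (x v : Fin k → ℂ) (t : ℝ) :
    nsq (x + (t : ℂ) • v) = nsq x + 2 * t * (cip x v).re + t ^ 2 * nsq v := by
  have h := cip_self (x + (t : ℂ) • v)
  have hexp : cip (x + (t : ℂ) • v) (x + (t : ℂ) • v)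
      = cip x x + (t : ℂ) * (cip x v + cip v x) + (t : ℂ) ^ 2 * cip v v := by
    simp only [cip_add_left, cip_add_right, cip_smul_left, cip_smul_right,
      Complex.conj_ofReal]
    ring
  have h2 := congrArg Complex.re h.symm
  rw [hexp] at h2
  rw [Complex.ofReal_re] at h2
  rw [h2, cip_self x, cip_self v, ← cip_conj x v]
  simp only [Complex.add_re, Complex.mul_re, Complex.ofReal_re, Complex.ofReal_im,
    Complex.add_im, Complex.conj_re, Complex.conj_im, ← Complex.ofReal_pow]
  ring

set_option maxHeartbeats 1000000 in
theorem stmt8 {n k : ℕ} (A : Matrix (Fin n) (Fin n) ℂ) (V : Matrix (Fin n) (Fin k) ℂ)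
    (θ : ℂ) (y z : Fin k → ℂ)
    (hV : Vᴴ * V = 1) (hy : nsq y = 1)
    (hRitz : (Vᴴ * ((A - θ • 1) * V)).mulVec y = 0)
    (M : Matrix (Fin k) (Fin k) ℂ)
    (hM : M = Vᴴ * (A - θ • 1)ᴴ * ((A - θ • 1) * V))
    (w : Fin k → ℂ) (hw : w = proj y z)
    (hne : proj y (M.mulVec w) = -(proj y (M.mulVec y)))
    (τ : ℝ) (s : Fin k → ℂ) (hs : s = y + (τ : ℂ) • w)
    (hmin : ∀ a b : ℂ, a • y + b • w ≠ 0 →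
      nsq ((A - θ • 1).mulVec (V.mulVec s)) / nsq s
        ≤ nsq ((A - θ • 1).mulVec (V.mulVec (a • y + b • w))) / nsq (a • y + b • w))
 :
    (τ - 1) * (nsq ((A - θ • 1).mulVec (V.mulVec y))
        - nsq ((A - θ • 1).mulVec (V.mulVec s)) / nsq s)
      = nsq ((A - θ • 1).mulVec (V.mulVec s)) * (1 - 1 / nsq s) := by
  set C := (A - θ • 1) * V with hC
  have hmv : ∀ u : Fin k → ℂ, (A - θ • 1).mulVec (V.mulVec u) = C.mulVec u := by
    intro u; rw [hC, ← Matrix.mulVec_mulVec]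
  have hMC : M = Cᴴ * C := by
    rw [hM, hC, Matrix.conjTranspose_mul]
  have cipM : ∀ u v : Fin k → ℂ, cip u (M.mulVec v) = cip (C.mulVec u) (C.mulVec v) := by
    intro u v; rw [cip_mulVec, ← hMC]
  -- orthogonality of y and w
  have hyy : cip y y = 1 := by rw [cip_self, hy]; norm_num
  have hyw : cip y w = 0 := by
    rw [hw, proj, cip_sub_right, cip_smul_right, hyy, mul_one, sub_self]
  have hwy : cip w y = 0 := by rw [← cip_conj, hyw, map_zero]
  set p := C.mulVec y with hp
  set q := C.mulVec w with hq
  set α := nsq p with hα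
  set γ := nsq q with hγ
  set ν := nsq w with hν
  have hγ0 : 0 ≤ γ := nsq_nonneg q
  have hν0 : 0 ≤ ν := nsq_nonneg w
  have hα0 : 0 ≤ α := nsq_nonneg p
  -- from the normal equations: cip q p = -γ
  have hqp : cip q p = -(γ : ℂ) := by
    have h2 := congrArg (cip w) hne
    simp only [proj, cip_sub_right, cip_neg_right, cip_smul_right, hwy, mul_zero,
      sub_zero] at h2
    rw [cipM, cipM, ← hp, ← hq, cip_self, ← hγ] at h2
    linear_combination h2
  have hpqre : (cip p q).re = -γ := by
    have h3 : cip p q = -(γ : ℂ) := by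
      rw [← cip_conj, hqp, map_neg, Complex.conj_ofReal]
    rw [h3, Complex.neg_re, Complex.ofReal_re]
  have hywre : (cip y w).re = 0 := by rw [hyw]; simp
  -- norms along the line
  have hNline : ∀ t : ℝ, nsq (C.mulVec (y + (t : ℂ) • w)) = α - 2 * t * γ + t ^ 2 * γ := by
    intro t
    rw [Matrix.mulVec_add, Matrix.mulVec_smul, ← hp, ← hq, nsq_add_smul, hpqre, ← hα, ← hγ]
    ring
  have hDline : ∀ t : ℝ, nsq (y + (t : ℂ) • w) = 1 + t ^ 2 * ν := by
    intro t; rw [nsq_add_smul, hywre, hy, ← hν]; ring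
  set N := α - 2 * τ * γ + τ ^ 2 * γ with hN
  set d := 1 + τ ^ 2 * ν with hd
  have hd0 : 0 < d := by nlinarith [sq_nonneg τ]
  have hNs : nsq ((A - θ • 1).mulVec (V.mulVec s)) = N := by
    rw [hmv, hs, hNline]
  have hDs : nsq s = d := by rw [hs, hDline]
  have hNy : nsq ((A - θ • 1).mulVec (V.mulVec y)) = α := by
    rw [hmv]
  -- minimality gives a family of inequalities
  have hQ : ∀ t : ℝ, 0 ≤ (α - 2 * t * γ + t ^ 2 * γ) * d - N * (1 + t ^ 2 * ν) := by
    intro t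
    have hD0 : 0 < 1 + t ^ 2 * ν := by nlinarith [sq_nonneg t]
    have hvne : (1 : ℂ) • y + (t : ℂ) • w ≠ 0 := by
      intro h0
      have h1 : nsq ((1 : ℂ) • y + (t : ℂ) • w) = 0 := by rw [h0]; simp [nsq]
      rw [one_smul, hDline] at h1
      linarith
    have hle := hmin 1 (t : ℂ) hvne
    rw [one_smul] at hle
    rw [hNs, hDs, hmv, hNline, hDline] at hle
    have := (div_le_div_iff₀ hd0 hD0).mp hle
    linarith
  -- stationarity
  have hstat : γ * (τ - 1) * d - N * ν * τ = 0 := by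
    set c := γ * d - N * ν with hc
    set L := 2 * (γ * (τ - 1) * d - N * ν * τ) with hL
    have hQh : ∀ h : ℝ, 0 ≤ c * h ^ 2 + L * h := by
      intro h
      have h1 := hQ (τ + h)
      have h2 : (α - 2 * (τ + h) * γ + (τ + h) ^ 2 * γ) * d - N * (1 + (τ + h) ^ 2 * ν)
          = c * h ^ 2 + L * h := by
        rw [hc, hL, hN, hd]; ring
      linarith [h2 ▸ h1]
    have hL0 : L = 0 := by
      by_contra hLne
      have hL2 : 0 < L ^ 2 := by positivity
      set e := |c| + 1 with he
      have he0 : 0 < e := by positivity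
      have hce : c ≤ e - 1 := by rw [he]; linarith [le_abs_self c]
      have h1 := hQh (-(L / e))
      have h2 : c * (-(L / e)) ^ 2 + L * (-(L / e)) = (L ^ 2 / e ^ 2) * (c - e) := by
        field_simp; ring
      rw [h2] at h1
      nlinarith [div_pos hL2 (by positivity : (0:ℝ) < e ^ 2)]
    linarith
  -- conclude
  have key : (τ - 1) * (α * d - N) = N * (d - 1) := by
    rw [hN, hd] at hstat ⊢
    linear_combination (-(τ - 1) * τ + τ) * hstat
  rw [hNs, hDs, hNy]
  field_simp
  linear_combination key
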